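/- The arithmetic function b₄, where b₄(n) is the number of primitive Dirichlet characters χ modulo n (with complex values) satisfying χ⁴ = 1, is multiplicative, and its values on prime powers are: b₄(4) = 1, b₄(8) = 2, b₄(16) = 4, and b₄(2^r) = 0 for r = 1 and r ≥ 5; and for every odd prime p and every r ≥ 1, b₄(p^r) = 1 if r = 1 and p ≡ 3 (mod 4), b₄(p^r) = 3 if r = 1 and p ≡ 1 (mod 4), and b₄(p^r) = 0 if r ≥ 2. -/

import Mathlib

/-- `b₄ n` is the number of primitive Dirichlet characters `χ` modulo `n` with values in `ℂ`
satisfying `χ ^ 4 = 1`. -/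
noncomputable def b₄ (n : ℕ) : ℕ :=
  Nat.card {χ : DirichletCharacter ℂ n // χ.IsPrimitive ∧ χ ^ 4 = 1}

open DirichletCharacter MulChar

noncomputable section Aux

/-- count of elements with fourth power one -/
private lemma card_pow4_congr {A B : Type*} [Monoid A] [Monoid B] (e : A ≃* B) :
    Nat.card {a : A // a ^ 4 = 1} = Nat.card {b : B // b ^ 4 = 1} := by
  refine Nat.card_congr (e.toEquiv.subtypeEquiv fun a => ?_)
  show a ^ 4 = 1 ↔ e a ^ 4 = 1
  rw [← map_pow]
  exact ⟨fun h => h ▸ map_one e, fun h => e.injective (by rw [h, map_one])⟩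

private def Ncard (n : ℕ) : ℕ := Nat.card {χ : DirichletCharacter ℂ n // χ ^ 4 = 1}

private lemma Ncard_eq_units (n : ℕ) [NeZero n] :
    Ncard n = Nat.card {u : (ZMod n)ˣ // u ^ 4 = 1} := by
  haveI : NeZero (Monoid.exponent (ZMod n)ˣ) := ⟨Monoid.exponent_ne_zero_of_finite⟩
  obtain ⟨e⟩ := CommGroup.monoidHom_mulEquiv_of_hasEnoughRootsOfUnity (ZMod n)ˣ ℂ
  exact (card_pow4_congr (MulChar.mulEquivToUnitHom)).trans (card_pow4_congr e)


private lemma card_pow4_cyclic (G : Type*) [CommGroup G] [Fintype G] [IsCyclic G] :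
    Nat.card {u : G // u ^ 4 = 1} = Nat.gcd (Fintype.card G) 4 := by
  classical
  obtain ⟨g, hg⟩ := IsCyclic.exists_generator (α := G)
  let φ : G →* G := powMonoidHom 4
  have hker : Nat.card {u : G // u ^ 4 = 1} = Nat.card φ.ker :=
    Nat.card_congr (Equiv.subtypeEquiv (Equiv.refl G) fun u => Iff.rfl)
  have hrange : φ.range = Subgroup.zpowers (g ^ 4) := by
    ext x
    rw [Subgroup.mem_zpowers_iff]
    constructor
    · rintro ⟨y, rfl⟩
      obtain ⟨k, rfl⟩ := hg y
      exact ⟨k, by show (g ^ 4) ^ k = φ (g ^ k); rw [powMonoidHom_apply]; group⟩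
    · rintro ⟨k, rfl⟩
      exact ⟨g ^ k, by rw [powMonoidHom_apply]; group⟩
  have h1 : Nat.card G = Nat.card (G ⧸ φ.ker) * Nat.card φ.ker :=
    Subgroup.card_eq_card_quotient_mul_card_subgroup φ.ker
  have h2 : Nat.card (G ⧸ φ.ker) = Nat.card φ.range :=
    Nat.card_congr (QuotientGroup.quotientKerEquivRange φ).toEquiv
  have h3 : Nat.card φ.range = Fintype.card G / Nat.gcd (Fintype.card G) 4 := by
    rw [hrange, Nat.card_zpowers, orderOf_pow,
      orderOf_eq_card_of_forall_mem_zpowers hg, Nat.card_eq_fintype_card]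
  have hpos : 0 < Fintype.card G := Fintype.card_pos
  set d := Nat.gcd (Fintype.card G) 4 with hd
  set K := Nat.card {u : G // u ^ 4 = 1} with hK
  have hdvd : d ∣ Fintype.card G := Nat.gcd_dvd_left _ _
  have hgpos : 0 < d := Nat.gcd_pos_of_pos_left _ hpos
  rw [h2, h3, Nat.card_eq_fintype_card, ← hker] at h1
  obtain ⟨k, hk⟩ := hdvd
  have hkpos : 0 < k := by
    rcases Nat.eq_zero_or_pos k with h | h
    · rw [h, mul_zero] at hk; omega
    · exact h
  have h4 : d * k = k * K := by
    calc d * k = Fintype.card G := hk.symm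
    _ = Fintype.card G / d * K := h1
    _ = k * K := by rw [hk, Nat.mul_div_cancel_left _ hgpos]
  exact (Nat.eq_of_mul_eq_mul_left hkpos ((mul_comm d k) ▸ h4)).symm

private lemma Ncard_cyclic (n : ℕ) [NeZero n] [IsCyclic (ZMod n)ˣ] :
    Ncard n = Nat.gcd (Fintype.card (ZMod n)ˣ) 4 := by
  rw [Ncard_eq_units, card_pow4_cyclic]

private lemma Ncard_one : Ncard 1 = 1 := by
  rw [Ncard_eq_units, Nat.card_eq_fintype_card]; decide

private lemma Ncard_two : Ncard 2 = 1 := by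
  rw [Ncard_eq_units, Nat.card_eq_fintype_card]; decide

private lemma Ncard_four : Ncard 4 = 2 := by
  rw [Ncard_eq_units, Nat.card_eq_fintype_card]; decide

private lemma Ncard_eight : Ncard 8 = 4 := by
  rw [Ncard_eq_units, Nat.card_eq_fintype_card]; decide

private lemma Ncard_sixteen : Ncard 16 = 8 := by
  rw [Ncard_eq_units, Nat.card_eq_fintype_card]; decide

private lemma Ncard_prime (p : ℕ) (hp : p.Prime) : Ncard p = Nat.gcd (p - 1) 4 := by
  haveI : Fact p.Prime := ⟨hp⟩
  rw [Ncard_cyclic, ZMod.card_units]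

private def b₄' (n : ℕ) : ℕ :=
  Nat.card {χ : DirichletCharacter ℂ n // χ.IsPrimitive ∧ χ ^ 4 = 1}

private lemma factorsThrough_of_dvd {n c d : ℕ} (χ : DirichletCharacter ℂ n)
    (h : χ.FactorsThrough c) (hcd : c ∣ d) (hdn : d ∣ n) : χ.FactorsThrough d := by
  obtain ⟨h1, ψ, hψ⟩ := h
  refine ⟨hdn, changeLevel hcd ψ, ?_⟩
  rw [hψ, ← changeLevel_trans]

private lemma card_split {α : Type*} [Finite α] (P Q : α → Prop) :
    Nat.card {a : α // Q a} =
      Nat.card {a : α // P a ∧ Q a} + Nat.card {a : α // ¬ P a ∧ Q a} := by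
  classical
  rw [← Nat.card_sum]
  refine Nat.card_congr ⟨fun a => if h : P a.1 then .inl ⟨a.1, h, a.2⟩ else .inr ⟨a.1, h, a.2⟩,
    fun x => x.elim (fun b => ⟨b.1, b.2.2⟩) (fun b => ⟨b.1, b.2.2⟩), fun a => ?_, fun x => ?_⟩
  · by_cases h : P a.1 <;> simp [h]
  · rcases x with b | b
    · simp [b.2.1]
    · simp [b.2.1]

private lemma Ncard_prime_pow_succ (p : ℕ) (hp : p.Prime) (r : ℕ) :
    Ncard (p ^ (r + 1)) = b₄' (p ^ (r + 1)) + Ncard (p ^ r) := by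
  classical
  haveI : NeZero (p ^ (r + 1)) := ⟨pow_ne_zero _ hp.pos.ne'⟩
  haveI : NeZero (p ^ r) := ⟨pow_ne_zero _ hp.pos.ne'⟩
  have hdvd : p ^ r ∣ p ^ (r + 1) := pow_dvd_pow p (Nat.le_succ r)
  have key : ∀ χ : DirichletCharacter ℂ (p ^ (r+1)),
      ¬ χ.IsPrimitive ↔ χ.FactorsThrough (p ^ r) := by
    intro χ
    constructor
    · intro h
      obtain ⟨s, hs, hcond⟩ := (Nat.dvd_prime_pow hp).mp (conductor_dvd_level χ)
      have hsr : s ≤ r := by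
        rcases Nat.lt_or_ge s (r+1) with h' | h'
        · omega
        · exact absurd (hcond.trans (by rw [le_antisymm hs h'])) h
      exact factorsThrough_of_dvd χ (hcond ▸ factorsThrough_conductor χ)
        (pow_dvd_pow p hsr) hdvd
    · intro h hprim
      have h1 : χ.conductor ≤ p ^ r := Nat.sInf_le h
      have h2 : p ^ r < p ^ (r+1) := Nat.pow_lt_pow_succ hp.one_lt
      rw [isPrimitive_def] at hprim
      omega
  rw [Ncard, card_split (fun χ => χ.IsPrimitive) (fun χ => χ ^ 4 = 1)]
  congr 1
  rw [Ncard]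
  have E1 : {χ : DirichletCharacter ℂ (p^(r+1)) // ¬ χ.IsPrimitive ∧ χ ^ 4 = 1} ≃
      {χ : DirichletCharacter ℂ (p^(r+1)) // χ.FactorsThrough (p^r) ∧ χ ^ 4 = 1} :=
    Equiv.subtypeEquiv (Equiv.refl _) (fun χ => and_congr_left fun _ => key χ)
  refine Nat.card_congr (E1.trans
    ⟨fun χ => ⟨χ.2.1.χ₀, ?_⟩, fun ψ => ⟨changeLevel hdvd ψ.1, ⟨hdvd, ψ.1, rfl⟩, ?_⟩,
      fun χ => ?_, fun ψ => ?_⟩)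
  · have h4 : changeLevel χ.2.1.dvd (χ.2.1.χ₀ ^ 4) = changeLevel χ.2.1.dvd 1 := by
      rw [map_pow, map_one, ← χ.2.1.eq_changeLevel, χ.2.2]
    exact changeLevel_injective χ.2.1.dvd h4
  · rw [← map_pow, ψ.2, map_one]
  · exact Subtype.ext χ.2.1.eq_changeLevel.symm
  · refine Subtype.ext ?_
    have h5 := (FactorsThrough.eq_changeLevel ⟨hdvd, ψ.1, rfl⟩ :
      changeLevel hdvd ψ.1 = changeLevel hdvd (FactorsThrough.χ₀ ⟨hdvd, ψ.1, rfl⟩))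
    exact (changeLevel_injective hdvd h5.symm)

private lemma b4'_two : b₄' 2 = 0 := by
  have h := Ncard_prime_pow_succ 2 Nat.prime_two 0
  norm_num [Ncard_two, Ncard_one] at h
  omega

private lemma b4'_four : b₄' 4 = 1 := by
  have h := Ncard_prime_pow_succ 2 Nat.prime_two 1
  norm_num [Ncard_four, Ncard_two] at h
  omega

private lemma b4'_eight : b₄' 8 = 2 := by
  have h := Ncard_prime_pow_succ 2 Nat.prime_two 2
  norm_num [Ncard_eight, Ncard_four] at h
  omega

private lemma b4'_sixteen : b₄' 16 = 4 := by
  have h := Ncard_prime_pow_succ 2 Nat.prime_two 3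
  norm_num [Ncard_sixteen, Ncard_eight] at h
  omega

private lemma b4'_prime (p : ℕ) (hp : p.Prime) : b₄' p = Nat.gcd (p - 1) 4 - 1 := by
  have h := Ncard_prime_pow_succ p hp 0
  rw [pow_one, pow_zero, Ncard_one, Ncard_prime p hp] at h
  have hg : 0 < Nat.gcd (p - 1) 4 := by
    have : (0:ℕ) < 4 := by norm_num
    exact Nat.gcd_pos_of_pos_right _ this
  omega

private lemma toUnitHom_pow_eq_one {n : ℕ} (χ : DirichletCharacter ℂ n) (h4 : χ ^ 4 = 1)
    (u : (ZMod n)ˣ) : (χ.toUnitHom u) ^ 4 = 1 := by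
  have h : (χ ^ 4) (u : ZMod n) = 1 := by rw [h4, MulChar.one_apply_coe]
  rw [MulChar.pow_apply_coe] at h
  ext
  rw [Units.val_pow_eq_pow_val, coe_toUnitHom, h, Units.val_one]

private lemma b4'_odd_prime_pow (p : ℕ) (hp : p.Prime) (hp2 : p ≠ 2) (r : ℕ) (hr : 2 ≤ r) :
    b₄' (p ^ r) = 0 := by
  classical
  obtain ⟨s, rfl⟩ : ∃ s, r = s + 2 := ⟨r - 2, by omega⟩
  haveI : NeZero (p ^ (s + 2)) := ⟨pow_ne_zero _ hp.pos.ne'⟩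
  haveI : NeZero (p ^ (s + 1)) := ⟨pow_ne_zero _ hp.pos.ne'⟩
  have hdvd : p ^ (s + 1) ∣ p ^ (s + 2) := pow_dvd_pow p (Nat.le_succ _)
  set f := ZMod.unitsMap hdvd with hf
  -- the kernel has cardinality p
  have hcard : Nat.card f.ker = p := by
    have hsurj : Function.Surjective f := ZMod.unitsMap_surjective hdvd
    have h1 : Nat.card (ZMod (p ^ (s+2)))ˣ = Nat.card ((ZMod (p^(s+2)))ˣ ⧸ f.ker) * Nat.card f.ker :=
      Subgroup.card_eq_card_quotient_mul_card_subgroup f.ker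
    have h2 : Nat.card ((ZMod (p^(s+2)))ˣ ⧸ f.ker) = Nat.card (ZMod (p ^ (s+1)))ˣ := by
      refine Nat.card_congr ((QuotientGroup.quotientKerEquivRange f).toEquiv.trans ?_)
      rw [MonoidHom.range_eq_top_of_surjective f hsurj]
      exact Subgroup.topEquiv.toEquiv
    rw [h2, Nat.card_eq_fintype_card, Nat.card_eq_fintype_card, ZMod.card_units_eq_totient,
      ZMod.card_units_eq_totient, Nat.totient_prime_pow hp (Nat.succ_pos _),
      Nat.totient_prime_pow hp (Nat.succ_pos _)] at h1
    rw [show s + 2 - 1 = s + 1 from rfl, show s + 1 - 1 = s from rfl] at h1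
    have h0 : 0 < p - 1 := by have := hp.one_lt; omega
    have hppos : 0 < p ^ s * (p - 1) := Nat.mul_pos (pow_pos hp.pos s) h0
    have hmain : (p ^ s * (p - 1)) * p = (p ^ s * (p - 1)) * Nat.card f.ker := by
      rw [← h1]; ring
    exact (Nat.eq_of_mul_eq_mul_left hppos hmain).symm
  -- characters with χ^4 = 1 are not primitive
  have hnp : ∀ χ : DirichletCharacter ℂ (p ^ (s+2)), χ ^ 4 = 1 → ¬ χ.IsPrimitive := by
    intro χ h4 hprim
    have hft : χ.FactorsThrough (p ^ (s+1)) := by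
      rw [factorsThrough_iff_ker_unitsMap hdvd]
      intro u hu
      rw [MonoidHom.mem_ker]
      have hu4 : (χ.toUnitHom u) ^ 4 = 1 := toUnitHom_pow_eq_one χ h4 u
      have hup : (χ.toUnitHom u) ^ p = 1 := by
        have : u ^ p = 1 := by
          have := pow_card_eq_one' (G := f.ker) (x := ⟨u, hu⟩)
          rw [hcard] at this
          exact_mod_cast congrArg (Subgroup.subtype f.ker) this
        rw [← map_pow, this, map_one]
      have hcop : Nat.Coprime p 4 := by
        refine hp.coprime_iff_not_dvd.mpr fun hdvd4 => hp2 ?_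
        exact (Nat.prime_dvd_prime_iff_eq hp Nat.prime_two).mp
          (hp.dvd_of_dvd_pow (show p ∣ 2 ^ 2 from hdvd4))
      have h1 : orderOf (χ.toUnitHom u) ∣ Nat.gcd p 4 :=
        Nat.dvd_gcd (orderOf_dvd_of_pow_eq_one hup) (orderOf_dvd_of_pow_eq_one hu4)
      rw [hcop] at h1
      exact orderOf_eq_one_iff.mp (Nat.eq_one_of_dvd_one h1 ▸ rfl)
    have h1 : χ.conductor ≤ p ^ (s+1) := Nat.sInf_le hft
    have h2 : p ^ (s+1) < p ^ (s+2) := Nat.pow_lt_pow_succ hp.one_lt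
    rw [isPrimitive_def] at hprim
    omega
  have : IsEmpty {χ : DirichletCharacter ℂ (p ^ (s+2)) // χ.IsPrimitive ∧ χ ^ 4 = 1} :=
    ⟨fun χ => hnp χ.1 χ.2.2 χ.2.1⟩
  rw [b₄', Nat.card_eq_zero]
  exact Or.inl this

private lemma quartic_lift (s : ℕ) : ∀ u : ℤ, Odd u → (16:ℤ) ∣ u - 1 →
    ∃ v : ℤ, Odd v ∧ (2 ^ (s + 4) : ℤ) ∣ v ^ 4 - u := by
  induction s with
  | zero =>
    intro u hu h16
    refine ⟨1, odd_one, ?_⟩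
    have : (1:ℤ) ^ 4 - u = -(u - 1) := by ring
    rw [this]
    have h : (2:ℤ) ^ (0 + 4) = 16 := by norm_num
    rw [h]
    exact dvd_neg.mpr h16
  | succ s ih =>
    intro u hu h16
    obtain ⟨v, hv, k, hk⟩ := ih u hu h16
    obtain ⟨w, hw⟩ : ∃ w, v ^ 3 + 1 = 2 * w := by
      obtain ⟨t, rfl⟩ := hv; exact ⟨4*t^3 + 6*t^2 + 3*t + 1, by ring⟩
    refine ⟨v + 2 ^ (s + 2) * k, ?_,
      k * w + 3 * v ^ 2 * k ^ 2 * 2 ^ s + v * k ^ 3 * 2 ^ (2*s + 3) + k ^ 4 * 2 ^ (3*s + 3), ?_⟩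
    · obtain ⟨t, rfl⟩ := hv; exact ⟨t + 2 ^ (s + 1) * k, by ring⟩
    · have hu' : u = v ^ 4 - 2 ^ (s + 4) * k := by linarith
      rw [hu']
      linear_combination (2 ^ (s + 4) * k) * hw

private lemma two_pow_factorsThrough (r : ℕ) (hr : 4 ≤ r) (χ : DirichletCharacter ℂ (2 ^ r))
    (h4 : χ ^ 4 = 1) : χ.FactorsThrough 16 := by
  haveI : NeZero (2 ^ r) := ⟨pow_ne_zero _ two_ne_zero⟩
  have hdvd : (16:ℕ) ∣ 2 ^ r := by
    have h : (16:ℕ) = 2 ^ 4 := by norm_num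
    rw [h]; exact pow_dvd_pow 2 hr
  rw [factorsThrough_iff_ker_unitsMap hdvd]
  intro u hu
  rw [MonoidHom.mem_ker] at hu ⊢
  set x := ((u : ZMod (2 ^ r))).val with hx
  have hcast : ((x:ℕ) : ZMod 16) = 1 := by
    have h1 := congrArg Units.val hu
    rw [ZMod.unitsMap_def] at h1
    rw [hx, ZMod.natCast_val]
    simpa [ZMod.castHom_apply] using h1
  have hodd : Odd ((x:ℤ)) := by
    have hcop : Nat.Coprime x (2 ^ r) := ZMod.val_coe_unit_coprime u
    have h2 : ¬ (2 ∣ x) := by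
      intro h2d
      have hc2 : Nat.Coprime x 2 := Nat.Coprime.coprime_dvd_right (dvd_pow_self 2 (by omega)) hcop
      have h1 : (2:ℕ) ∣ 1 := hc2 ▸ Nat.dvd_gcd h2d dvd_rfl
      omega
    have : Odd x := Nat.odd_iff.mpr (by omega)
    obtain ⟨t, ht⟩ := this
    exact ⟨(t:ℤ), by exact_mod_cast ht⟩
  have h16 : (16:ℤ) ∣ (x:ℤ) - 1 := by
    have h1 : (((x:ℤ) - 1 : ℤ) : ZMod 16) = 0 := by
      push_cast
      rw [hcast]
      ring
    have := (ZMod.intCast_zmod_eq_zero_iff_dvd _ 16).mp h1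
    exact_mod_cast this
  obtain ⟨s, hs⟩ : ∃ s, r = s + 4 := ⟨r - 4, by omega⟩
  subst hs
  obtain ⟨v, hvodd, hdvdv⟩ := quartic_lift s (x:ℤ) hodd h16
  have hv : ((v : ZMod (2 ^ (s + 4)))) ^ 4 = ((x:ℕ) : ZMod (2 ^ (s + 4))) := by
    have h0 : (((v ^ 4 - (x:ℤ) : ℤ)) : ZMod (2 ^ (s + 4))) = 0 := by
      rw [ZMod.intCast_zmod_eq_zero_iff_dvd]
      exact_mod_cast hdvdv
    push_cast at h0 ⊢
    linear_combination h0
  have hux : ((x:ℕ) : ZMod (2 ^ (s + 4))) = (u : ZMod (2 ^ (s + 4))) := by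
    rw [hx, ZMod.natCast_val, ZMod.cast_id]
  have hunit : IsUnit (v : ZMod (2 ^ (s + 4))) := by
    refine IsUnit.of_mul_eq_one ((v : ZMod (2 ^ (s + 4))) ^ 3 * ↑u⁻¹) ?_
    have hm : (v : ZMod (2 ^ (s + 4))) * ((v : ZMod (2 ^ (s + 4))) ^ 3 * ↑u⁻¹)
        = (v : ZMod (2 ^ (s + 4))) ^ 4 * ↑u⁻¹ := by ring
    rw [hm, hv, hux]
    exact u.mul_inv
  ext
  rw [coe_toUnitHom, Units.val_one, ← hux, ← hv, map_pow, ← MulChar.pow_apply' χ (by norm_num) ,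
    h4, MulChar.one_apply hunit]

private lemma b4'_two_pow (r : ℕ) (hr : 5 ≤ r) : b₄' (2 ^ r) = 0 := by
  have hnp : ∀ χ : DirichletCharacter ℂ (2 ^ r), χ ^ 4 = 1 → ¬ χ.IsPrimitive := by
    intro χ h4 hprim
    have hft := two_pow_factorsThrough r (by omega) χ h4
    have h1 : χ.conductor ≤ 16 := Nat.sInf_le hft
    have h2 : (16:ℕ) < 2 ^ r := by
      calc (16:ℕ) = 2 ^ 4 := by norm_num
      _ < 2 ^ r := Nat.pow_lt_pow_right (by norm_num) (by omega)
    rw [isPrimitive_def] at hprim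
    omega
  have : IsEmpty {χ : DirichletCharacter ℂ (2 ^ r) // χ.IsPrimitive ∧ χ ^ 4 = 1} :=
    ⟨fun χ => hnp χ.1 χ.2.2 χ.2.1⟩
  rw [b₄', Nat.card_eq_zero]
  exact Or.inl this

private lemma b4'_one : b₄' 1 = 1 := by
  haveI h1 : Nonempty {χ : DirichletCharacter ℂ 1 // χ.IsPrimitive ∧ χ ^ 4 = 1} :=
    ⟨⟨1, isPrimitive_one_level_one, one_pow 4⟩⟩
  rw [b₄']
  exact Nat.card_eq_one_iff_unique.mpr ⟨inferInstance, h1⟩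

section Mult

private lemma unitsMap_eq_one_iff {N d : ℕ} [NeZero N] (hd : d ∣ N) (v : (ZMod N)ˣ) :
    ZMod.unitsMap hd v = 1 ↔ (d:ℤ) ∣ (((v : ZMod N).val : ℤ) - 1) := by
  have hval : ((ZMod.unitsMap hd v : ZMod d)) = (((v : ZMod N).val : ℕ) : ZMod d) := by
    rw [ZMod.unitsMap_def]
    show (ZMod.castHom hd (ZMod d)) ((v : ZMod N)) = _
    rw [ZMod.castHom_apply, ← ZMod.natCast_val]
  rw [Units.ext_iff, Units.val_one, hval]
  have : (((((v : ZMod N).val : ℕ)) : ZMod d)) = ((((v : ZMod N).val : ℤ)) : ZMod d) := by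
    push_cast; ring
  rw [this]
  constructor
  · intro hh
    have h0 : ((((v : ZMod N).val : ℤ) - 1 : ℤ) : ZMod d) = 0 := by push_cast [hh]; ring
    exact_mod_cast (ZMod.intCast_zmod_eq_zero_iff_dvd _ d).mp h0
  · intro hh
    have h0 : ((((v : ZMod N).val : ℤ) - 1 : ℤ) : ZMod d) = 0 :=
      (ZMod.intCast_zmod_eq_zero_iff_dvd _ d).mpr (by exact_mod_cast hh)
    push_cast at h0 ⊢
    linear_combination h0

private lemma units_eq_one_of_crt {a b N : ℕ} [NeZero N] (cop : Nat.Coprime a b)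
    (hab : a * b ∣ N) (v : (ZMod N)ˣ)
    (h1 : ZMod.unitsMap ((dvd_mul_right a b).trans hab) v = 1)
    (h2 : ZMod.unitsMap ((dvd_mul_left b a).trans hab) v = 1) :
    ZMod.unitsMap hab v = 1 := by
  rw [unitsMap_eq_one_iff] at h1 h2 ⊢
  have hcop : IsCoprime (a:ℤ) (b:ℤ) := Int.isCoprime_iff_gcd_eq_one.mpr cop
  exact_mod_cast hcop.mul_dvd h1 h2

variable {m n : ℕ}

private def crtUnits (h : Nat.Coprime m n) : (ZMod (m * n))ˣ ≃* (ZMod m)ˣ × (ZMod n)ˣ :=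
  (Units.mapEquiv (ZMod.chineseRemainder h).toMulEquiv).trans MulEquiv.prodUnits

private lemma crtUnits_fst (h : Nat.Coprime m n) (v : (ZMod (m * n))ˣ) :
    (crtUnits h v).1 = ZMod.unitsMap (dvd_mul_right m n) v := by
  ext
  show ((ZMod.chineseRemainder h ((v : ZMod (m * n)))).1) = _
  rw [ZMod.unitsMap_def]
  show _ = (ZMod.castHom (dvd_mul_right m n) (ZMod m)) ((v : ZMod (m * n)))
  rw [ZMod.castHom_apply]
  exact Prod.fst_zmod_cast _

private lemma crtUnits_snd (h : Nat.Coprime m n) (v : (ZMod (m * n))ˣ) :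
    (crtUnits h v).2 = ZMod.unitsMap (dvd_mul_left n m) v := by
  ext
  show ((ZMod.chineseRemainder h ((v : ZMod (m * n)))).2) = _
  rw [ZMod.unitsMap_def]
  show _ = (ZMod.castHom (dvd_mul_left n m) (ZMod n)) ((v : ZMod (m * n)))
  rw [ZMod.castHom_apply]
  exact Prod.snd_zmod_cast _

private def phi (m n : ℕ) :
    DirichletCharacter ℂ m × DirichletCharacter ℂ n →* DirichletCharacter ℂ (m * n) where
  toFun p := changeLevel (dvd_mul_right m n) p.1 * changeLevel (dvd_mul_left n m) p.2
  map_one' := by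
    rw [Prod.fst_one, Prod.snd_one, map_one, map_one, mul_one]
  map_mul' p q := by
    rw [Prod.fst_mul, Prod.snd_mul, map_mul, map_mul]
    exact mul_mul_mul_comm _ _ _ _

private lemma toUnitHom_ofUnitHom {k : ℕ} (f : (ZMod k)ˣ →* ℂˣ) :
    (MulChar.ofUnitHom f : DirichletCharacter ℂ k).toUnitHom = f := by
  rw [toUnitHom_eq, ofUnitHom_eq, Equiv.apply_symm_apply]

private lemma toUnitHom_mul {k : ℕ} (χ ψ : DirichletCharacter ℂ k) :
    (χ * ψ).toUnitHom = χ.toUnitHom * ψ.toUnitHom := by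
  ext u
  rw [toUnitHom_eq, toUnitHom_eq, toUnitHom_eq]
  push_cast [MulChar.equivToUnitHom_mul_apply]
  rfl

private lemma phi_eval (h : Nat.Coprime m n) (p : DirichletCharacter ℂ m × DirichletCharacter ℂ n)
    (v : (ZMod (m * n))ˣ) :
    (phi m n p).toUnitHom v =
      p.1.toUnitHom ((crtUnits h v).1) * p.2.toUnitHom ((crtUnits h v).2) := by
  show ((changeLevel (dvd_mul_right m n) p.1 * changeLevel (dvd_mul_left n m) p.2).toUnitHom) v = _
  rw [toUnitHom_mul, MonoidHom.mul_apply, changeLevel_toUnitHom, changeLevel_toUnitHom,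
    crtUnits_fst h, crtUnits_snd h]
  rfl

private lemma phi_injective (h : Nat.Coprime m n) : Function.Injective (phi m n) := by
  intro p q hpq
  have key : ∀ v, (phi m n p).toUnitHom v = (phi m n q).toUnitHom v := fun v => by rw [hpq]
  have h1 : p.1 = q.1 := by
    rw [← toUnitHom_inj]
    ext u
    have := key ((crtUnits h).symm (u, 1))
    rw [phi_eval h, phi_eval h, MulEquiv.apply_symm_apply] at this
    simpa using congrArg Units.val this
  have h2 : p.2 = q.2 := by
    rw [← toUnitHom_inj]
    ext u
    have := key ((crtUnits h).symm (1, u))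
    rw [phi_eval h, phi_eval h, MulEquiv.apply_symm_apply] at this
    simpa using congrArg Units.val this
  exact Prod.ext h1 h2

private def comp₁ (h : Nat.Coprime m n) (χ : DirichletCharacter ℂ (m * n)) :
    DirichletCharacter ℂ m :=
  MulChar.ofUnitHom (χ.toUnitHom.comp ((crtUnits h).symm.toMonoidHom.comp (MonoidHom.inl _ _)))

private def comp₂ (h : Nat.Coprime m n) (χ : DirichletCharacter ℂ (m * n)) :
    DirichletCharacter ℂ n :=
  MulChar.ofUnitHom (χ.toUnitHom.comp ((crtUnits h).symm.toMonoidHom.comp (MonoidHom.inr _ _)))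

private lemma phi_recompose (h : Nat.Coprime m n) (χ : DirichletCharacter ℂ (m * n)) :
    phi m n (comp₁ h χ, comp₂ h χ) = χ := by
  rw [← toUnitHom_inj]
  refine MonoidHom.ext fun v => ?_
  rw [phi_eval h]
  have e1 : (comp₁ h χ, comp₂ h χ).1.toUnitHom ((crtUnits h v).1)
      = χ.toUnitHom ((crtUnits h).symm ((crtUnits h v).1, 1)) := by
    show (comp₁ h χ).toUnitHom _ = _
    rw [comp₁, toUnitHom_ofUnitHom]
    rfl
  have e2 : (comp₁ h χ, comp₂ h χ).2.toUnitHom ((crtUnits h v).2)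
      = χ.toUnitHom ((crtUnits h).symm (1, (crtUnits h v).2)) := by
    show (comp₂ h χ).toUnitHom _ = _
    rw [comp₂, toUnitHom_ofUnitHom]
    rfl
  rw [e1, e2, ← map_mul χ.toUnitHom, ← map_mul (crtUnits h).symm, Prod.mk_mul_mk, mul_one,
    one_mul, MulEquiv.symm_apply_apply]

private lemma conductor_phi [NeZero m] [NeZero n] (h : Nat.Coprime m n)
    (p : DirichletCharacter ℂ m × DirichletCharacter ℂ n) :
    (phi m n p).conductor = p.1.conductor * p.2.conductor := by
  haveI : NeZero (m * n) := ⟨mul_ne_zero (NeZero.ne m) (NeZero.ne n)⟩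
  set c₁ := p.1.conductor with hc₁
  set c₂ := p.2.conductor with hc₂
  have hc₁m : c₁ ∣ m := conductor_dvd_level p.1
  have hc₂n : c₂ ∣ n := conductor_dvd_level p.2
  have hcc : c₁ * c₂ ∣ m * n := mul_dvd_mul hc₁m hc₂n
  have hft : (phi m n p).FactorsThrough (c₁ * c₂) := by
    have hf1 := (factorsThrough_conductor p.1).eq_changeLevel
    have hf2 := (factorsThrough_conductor p.2).eq_changeLevel
    refine ⟨hcc, changeLevel (dvd_mul_right c₁ c₂) (factorsThrough_conductor p.1).χ₀ *
      changeLevel (dvd_mul_left c₂ c₁) (factorsThrough_conductor p.2).χ₀, ?_⟩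
    rw [map_mul]
    have e1 : changeLevel hcc (changeLevel (dvd_mul_right c₁ c₂)
        (factorsThrough_conductor p.1).χ₀) = changeLevel (dvd_mul_right m n) p.1 := by
      conv_rhs => rw [hf1]
      rw [← changeLevel_trans, ← changeLevel_trans]
    have e2 : changeLevel hcc (changeLevel (dvd_mul_left c₂ c₁)
        (factorsThrough_conductor p.2).χ₀) = changeLevel (dvd_mul_left n m) p.2 := by
      conv_rhs => rw [hf2]
      rw [← changeLevel_trans, ← changeLevel_trans]
    rw [e1, e2]
    rfl
  have hub : (phi m n p).conductor ≤ c₁ * c₂ := Nat.sInf_le hft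
  set c := (phi m n p).conductor with hc
  set a₁ := Nat.gcd c m with ha₁def
  set a₂ := Nat.gcd c n with ha₂def
  have hcdvd : c ∣ m * n := conductor_dvd_level _
  have ha₁ : a₁ ∣ m := Nat.gcd_dvd_right c m
  have ha₂ : a₂ ∣ n := Nat.gcd_dvd_right c n
  have hcopa : Nat.Coprime a₁ a₂ :=
    Nat.Coprime.coprime_dvd_left ha₁ (Nat.Coprime.coprime_dvd_right ha₂ h)
  have hgcdmul : c = a₁ * a₂ := by
    refine Nat.dvd_antisymm ?_
      (Nat.Coprime.mul_dvd_of_dvd_of_dvd hcopa (Nat.gcd_dvd_left c m) (Nat.gcd_dvd_left c n))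
    calc c = Nat.gcd c (m * n) := (Nat.gcd_eq_left hcdvd).symm
    _ ∣ a₁ * a₂ := gcd_mul_dvd_mul_gcd c m n
  have hab : a₁ * a₂ ∣ m * n := hgcdmul ▸ hcdvd
  have hfact : (phi m n p).FactorsThrough (a₁ * a₂) := hgcdmul ▸ factorsThrough_conductor _
  have hkerle := (factorsThrough_iff_ker_unitsMap hab).mp hfact
  have claim1 : p.1.FactorsThrough a₁ := by
    rw [factorsThrough_iff_ker_unitsMap ha₁]
    intro u hu
    rw [MonoidHom.mem_ker] at hu
    set v := (crtUnits h).symm (u, 1) with hv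
    have hv1 : ZMod.unitsMap (dvd_mul_right m n) v = u := by
      rw [← crtUnits_fst h, hv, MulEquiv.apply_symm_apply]
    have hv2 : ZMod.unitsMap (dvd_mul_left n m) v = 1 := by
      rw [← crtUnits_snd h, hv, MulEquiv.apply_symm_apply]
    have hva : ZMod.unitsMap ((dvd_mul_right a₁ a₂).trans hab) v = 1 := by
      rw [← ZMod.unitsMap_comp ha₁ (dvd_mul_right m n), MonoidHom.comp_apply, hv1]
      exact hu
    have hvb : ZMod.unitsMap ((dvd_mul_left a₂ a₁).trans hab) v = 1 := by
      rw [← ZMod.unitsMap_comp ha₂ (dvd_mul_left n m), MonoidHom.comp_apply, hv2]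
      exact map_one _
    have hker : ZMod.unitsMap hab v = 1 := units_eq_one_of_crt hcopa hab v hva hvb
    have hχv : (phi m n p).toUnitHom v = 1 := hkerle (MonoidHom.mem_ker.mpr hker)
    rw [phi_eval h, hv, MulEquiv.apply_symm_apply] at hχv
    rw [MonoidHom.mem_ker]
    simpa using hχv
  have claim2 : p.2.FactorsThrough a₂ := by
    rw [factorsThrough_iff_ker_unitsMap ha₂]
    intro u hu
    rw [MonoidHom.mem_ker] at hu
    set v := (crtUnits h).symm (1, u) with hv
    have hv1 : ZMod.unitsMap (dvd_mul_right m n) v = 1 := by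
      rw [← crtUnits_fst h, hv, MulEquiv.apply_symm_apply]
    have hv2 : ZMod.unitsMap (dvd_mul_left n m) v = u := by
      rw [← crtUnits_snd h, hv, MulEquiv.apply_symm_apply]
    have hva : ZMod.unitsMap ((dvd_mul_right a₁ a₂).trans hab) v = 1 := by
      rw [← ZMod.unitsMap_comp ha₁ (dvd_mul_right m n), MonoidHom.comp_apply, hv1]
      exact map_one _
    have hvb : ZMod.unitsMap ((dvd_mul_left a₂ a₁).trans hab) v = 1 := by
      rw [← ZMod.unitsMap_comp ha₂ (dvd_mul_left n m), MonoidHom.comp_apply, hv2]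
      exact hu
    have hker : ZMod.unitsMap hab v = 1 := units_eq_one_of_crt hcopa hab v hva hvb
    have hχv : (phi m n p).toUnitHom v = 1 := hkerle (MonoidHom.mem_ker.mpr hker)
    rw [phi_eval h, hv, MulEquiv.apply_symm_apply] at hχv
    rw [MonoidHom.mem_ker]
    simpa using hχv
  have hl1 : c₁ ≤ a₁ := Nat.sInf_le claim1
  have hl2 : c₂ ≤ a₂ := Nat.sInf_le claim2
  have hmul : c₁ * c₂ ≤ a₁ * a₂ := Nat.mul_le_mul hl1 hl2
  omega

private lemma comp_phi (h : Nat.Coprime m n)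
    (q : DirichletCharacter ℂ m × DirichletCharacter ℂ n) :
    comp₁ h (phi m n q) = q.1 ∧ comp₂ h (phi m n q) = q.2 := by
  have heq := phi_injective h (phi_recompose h (phi m n q))
  exact ⟨congrArg Prod.fst heq, congrArg Prod.snd heq⟩

private lemma b4'_mul {m n : ℕ} [NeZero m] [NeZero n] (h : Nat.Coprime m n) :
    b₄' (m * n) = b₄' m * b₄' n := by
  haveI : NeZero (m * n) := ⟨mul_ne_zero (NeZero.ne m) (NeZero.ne n)⟩
  have hphi4 : ∀ q : DirichletCharacter ℂ m × DirichletCharacter ℂ n,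
      (phi m n q) ^ 4 = 1 ↔ (q.1 ^ 4 = 1 ∧ q.2 ^ 4 = 1) := by
    intro q
    constructor
    · intro hq
      have h0 : phi m n (q ^ 4) = phi m n 1 := by rw [map_pow, hq, map_one]
      have h2 := phi_injective h h0
      exact ⟨congrArg Prod.fst h2, congrArg Prod.snd h2⟩
    · rintro ⟨h1, h2⟩
      rw [← map_pow]
      have h0 : q ^ 4 = 1 := Prod.ext h1 h2
      rw [h0, map_one]
  have hprim : ∀ q : DirichletCharacter ℂ m × DirichletCharacter ℂ n,
      (phi m n q).IsPrimitive ↔ (q.1.IsPrimitive ∧ q.2.IsPrimitive) := by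
    intro q
    rw [isPrimitive_def, isPrimitive_def, isPrimitive_def, conductor_phi h]
    constructor
    · intro hq
      have hc₁m : q.1.conductor ∣ m := conductor_dvd_level q.1
      have hc₂n : q.2.conductor ∣ n := conductor_dvd_level q.2
      have hm : m ∣ q.1.conductor := by
        rw [← Nat.mul_dvd_mul_iff_right (Nat.pos_of_ne_zero (NeZero.ne n))]
        calc m * n = q.1.conductor * q.2.conductor := hq.symm
        _ ∣ q.1.conductor * n := mul_dvd_mul_left _ hc₂n
      have hn : n ∣ q.2.conductor := by
        rw [← Nat.mul_dvd_mul_iff_left (Nat.pos_of_ne_zero (NeZero.ne m))]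
        calc m * n = q.1.conductor * q.2.conductor := hq.symm
        _ ∣ m * q.2.conductor := mul_dvd_mul_right hc₁m _
      exact ⟨Nat.dvd_antisymm hc₁m hm, Nat.dvd_antisymm hc₂n hn⟩
    · rintro ⟨h1, h2⟩; rw [h1, h2]
  rw [b₄', b₄', b₄', ← Nat.card_prod]
  refine Nat.card_congr ⟨fun χ => ⟨⟨comp₁ h χ.1, ?_⟩, ⟨comp₂ h χ.1, ?_⟩⟩,
    fun q => ⟨phi m n (q.1.1, q.2.1), ?_⟩, fun χ => ?_, fun q => ?_⟩
  · have hre : phi m n (comp₁ h χ.1, comp₂ h χ.1) = χ.1 := phi_recompose h χ.1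
    have hp := (hprim _).mp (by rw [hre]; exact χ.2.1)
    have h4 := (hphi4 _).mp (by rw [hre]; exact χ.2.2)
    exact ⟨hp.1, h4.1⟩
  · have hre : phi m n (comp₁ h χ.1, comp₂ h χ.1) = χ.1 := phi_recompose h χ.1
    have hp := (hprim _).mp (by rw [hre]; exact χ.2.1)
    have h4 := (hphi4 _).mp (by rw [hre]; exact χ.2.2)
    exact ⟨hp.2, h4.2⟩
  · exact ⟨(hprim _).mpr ⟨q.1.2.1, q.2.2.1⟩, (hphi4 _).mpr ⟨q.1.2.2, q.2.2.2⟩⟩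
  · exact Subtype.ext (phi_recompose h χ.1)
  · have hc := comp_phi h (q.1.1, q.2.1)
    exact Prod.ext (Subtype.ext hc.1) (Subtype.ext hc.2)

end Mult

end Aux

theorem b₄_multiplicative_and_values :
    b₄ 1 = 1 ∧
    (∀ m n : ℕ, Nat.Coprime m n → b₄ (m * n) = b₄ m * b₄ n) ∧
    b₄ 2 = 0 ∧
    b₄ 4 = 1 ∧
    b₄ 8 = 2 ∧
    b₄ 16 = 4 ∧
    (∀ r : ℕ, 5 ≤ r → b₄ (2 ^ r) = 0) ∧
    (∀ p : ℕ, p.Prime → p ≠ 2 →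
      (p % 4 = 3 → b₄ p = 1) ∧
      (p % 4 = 1 → b₄ p = 3) ∧
      (∀ r : ℕ, 2 ≤ r → b₄ (p ^ r) = 0)) := by
  have hb : ∀ k, b₄ k = b₄' k := fun k => rfl
  refine ⟨by rw [hb]; exact b4'_one, ?_, by rw [hb]; exact b4'_two,
    by rw [hb]; exact b4'_four, by rw [hb]; exact b4'_eight, by rw [hb]; exact b4'_sixteen,
    fun r hr => by rw [hb]; exact b4'_two_pow r hr, ?_⟩
  · intro m n h
    rcases Nat.eq_zero_or_pos m with hm | hm
    · subst hm
      have hn1 : n = 1 := Nat.coprime_zero_left n |>.mp h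
      subst hn1
      rw [mul_one, hb 1, b4'_one, mul_one]
    rcases Nat.eq_zero_or_pos n with hn | hn
    · subst hn
      have hm1 : m = 1 := Nat.coprime_zero_right m |>.mp h
      subst hm1
      rw [one_mul, hb 1, b4'_one, one_mul]
    haveI : NeZero m := ⟨hm.ne'⟩
    haveI : NeZero n := ⟨hn.ne'⟩
    rw [hb, hb, hb]
    exact b4'_mul h
  · intro p hp hp2
    have hodd : p % 2 = 1 := Nat.odd_iff.mp (hp.odd_of_ne_two hp2)
    refine ⟨fun h3 => ?_, fun h1 => ?_, fun r hr => by rw [hb]; exact b4'_odd_prime_pow p hp hp2 r hr⟩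
    · rw [hb, b4'_prime p hp]
      have hmod : (p - 1) % 4 = 2 := by omega
      rw [Nat.gcd_comm, Nat.gcd_rec, hmod]
      decide
    · rw [hb, b4'_prime p hp]
      have hmod : (p - 1) % 4 = 0 := by omega
      rw [Nat.gcd_comm, Nat.gcd_rec, hmod]
      decide
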